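/- Let Γ = (V,E,c) be a finite connected network with Laplacian L defined by L(u)(x) = Σ_{y∈V} c(x,y)(u(x) − u(y)). Let q ∈ C(V), ω a weight (positive function with Σ ω(x)² = 1), and q_ω = −L(ω)/ω. Then the Schrödinger operator L_q(u) = L(u) + qu is (λ,ω)-elliptic (positive semi-definite with simple lowest eigenvalue λ and eigenfunction ω) if and only if q = q_ω + λ for some λ ≥ 0. -/

import Mathlib

open Finset

noncomputable def ip {V : Type*} [Fintype V] (u v : V → ℝ) : ℝ := ∑ x, u x * v x

/-- The Laplacian of a network with conductance `c`. -/
noncomputable def lap {V : Type*} [Fintype V] (c : V → V → ℝ) (u : V → ℝ) : V → ℝ :=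
  fun x => ∑ y, c x y * (u x - u y)

/-- The Schrödinger operator `L_q(u) = L(u) + q·u` on a finite connected network is
`(λ,ω)`-elliptic iff `q = q_ω + λ` with `λ ≥ 0`, where `q_ω = −L(ω)/ω`. -/
theorem stmt5 {V : Type*} [Fintype V] [Nonempty V]
    (c : V → V → ℝ) (q ω : V → ℝ) (lam : ℝ)
    -- Γ is a finite connected network
    (hc_symm : ∀ x y, c x y = c y x)
    (hc_nonneg : ∀ x y, 0 ≤ c x y)
    (hc_diag : ∀ x, c x x = 0)
    (hconn : ∀ x y : V, Relation.ReflTransGen (fun a b => 0 < c a b) x y)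
    -- ω is a unit weight
    (hω_pos : ∀ x, 0 < ω x)
    (hω_unit : ∑ x, (ω x) ^ 2 = 1) :
    -- L_q is (λ,ω)-elliptic ↔ λ ≥ 0 and q = q_ω + λ
    ((∀ u v : V → ℝ, ip (fun x => lap c u x + q x * u x) v
        = ip u (fun x => lap c v x + q x * v x)) ∧
     (∀ u : V → ℝ, 0 ≤ ip (fun x => lap c u x + q x * u x) u) ∧
     ((fun x => lap c ω x + q x * ω x) = lam • ω) ∧
     (∀ (μ : ℝ) (u : V → ℝ), u ≠ 0 →
        (fun x => lap c u x + q x * u x) = μ • u → lam ≤ μ) ∧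
     (∀ u : V → ℝ, (fun x => lap c u x + q x * u x) = lam • u → ∃ a : ℝ, u = a • ω))
    ↔ (0 ≤ lam ∧ q = fun x => -(lap c ω x) / ω x + lam) := by
  have hω0 : ∀ x, ω x ≠ 0 := fun x => (hω_pos x).ne'
  -- cross-term swap
  have hcross : ∀ u v : V → ℝ,
      ∑ x, ∑ y, c x y * u y * v x = ∑ x, ∑ y, c x y * u x * v y := by
    intro u v
    rw [Finset.sum_comm]
    exact Finset.sum_congr rfl fun a _ => Finset.sum_congr rfl fun b _ => by
      rw [hc_symm b a]
  -- symmetry of the Schrödinger operator (for arbitrary potential)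
  have hsym : ∀ (p : V → ℝ) (u v : V → ℝ),
      ip (fun x => lap c u x + p x * u x) v = ip u (fun x => lap c v x + p x * v x) := by
    intro p u v
    unfold ip lap
    have l1 : ∑ x, (∑ y, c x y * (u x - u y) + p x * u x) * v x
        = ((∑ x, ∑ y, c x y * u x * v x) - ∑ x, ∑ y, c x y * u y * v x)
          + ∑ x, p x * u x * v x := by
      rw [← Finset.sum_sub_distrib, ← Finset.sum_add_distrib]
      refine Finset.sum_congr rfl fun x _ => ?_
      rw [add_mul, Finset.sum_mul]
      have : ∑ y, c x y * (u x - u y) * v x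
          = ∑ y, (c x y * u x * v x - c x y * u y * v x) :=
        Finset.sum_congr rfl fun y _ => by ring
      rw [this, Finset.sum_sub_distrib]
    have l2 : ∑ x, u x * (∑ y, c x y * (v x - v y) + p x * v x)
        = ((∑ x, ∑ y, c x y * u x * v x) - ∑ x, ∑ y, c x y * u x * v y)
          + ∑ x, p x * u x * v x := by
      rw [← Finset.sum_sub_distrib, ← Finset.sum_add_distrib]
      refine Finset.sum_congr rfl fun x _ => ?_
      rw [mul_add, Finset.mul_sum]
      have : ∑ y, u x * (c x y * (v x - v y))
          = ∑ y, (c x y * u x * v x - c x y * u x * v y) :=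
        Finset.sum_congr rfl fun y _ => by ring
      rw [this, Finset.sum_sub_distrib]
      rw [mul_comm (u x) (p x * v x), mul_assoc, mul_comm (v x) (u x), ← mul_assoc]
    rw [l1, l2, hcross u v]
  -- ground state transform, pointwise
  have hrep : ∀ (f : V → ℝ) (x : V),
      lap c (fun y => ω y * f y) x + (-(lap c ω x) / ω x) * (ω x * f x)
        = ∑ y, c x y * ω y * (f x - f y) := by
    intro f x
    have h1 : (-(lap c ω x) / ω x) * (ω x * f x) = -(lap c ω x * f x) := by
      field_simp [hω0 x]
    rw [h1]
    simp only [lap]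
    rw [Finset.sum_mul, ← Finset.sum_neg_distrib, ← Finset.sum_add_distrib]
    exact Finset.sum_congr rfl fun y _ => by ring
  -- quadratic form identity
  have hQ : ∀ f : V → ℝ,
      ∑ x, (∑ y, c x y * ω y * (f x - f y)) * (ω x * f x)
        = (1 / 2) * ∑ x, ∑ y, c x y * ω x * ω y * (f x - f y) ^ 2 := by
    intro f
    have e1 : ∑ x, (∑ y, c x y * ω y * (f x - f y)) * (ω x * f x)
        = ∑ x, ∑ y, c x y * ω x * ω y * (f x * (f x - f y)) := by
      refine Finset.sum_congr rfl fun x _ => ?_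
      rw [Finset.sum_mul]
      exact Finset.sum_congr rfl fun y _ => by ring
    have e2 : ∑ x, ∑ y, c x y * ω x * ω y * (f x * (f x - f y))
        = ∑ x, ∑ y, c x y * ω x * ω y * (f y * (f y - f x)) := by
      rw [Finset.sum_comm]
      exact Finset.sum_congr rfl fun a _ => Finset.sum_congr rfl fun b _ => by
        rw [hc_symm b a]; ring
    have e3 : ∑ x, ∑ y, (c x y * ω x * ω y * (f x * (f x - f y))
          + c x y * ω x * ω y * (f y * (f y - f x)))
        = ∑ x, ∑ y, c x y * ω x * ω y * (f x - f y) ^ 2 :=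
      Finset.sum_congr rfl fun x _ => Finset.sum_congr rfl fun y _ => by ring
    simp only [Finset.sum_add_distrib] at e3
    rw [e1]
    linarith [e2, e3]
  have hterm_nonneg : ∀ (f : V → ℝ) (x y : V),
      0 ≤ c x y * ω x * ω y * (f x - f y) ^ 2 := fun f x y =>
    mul_nonneg (mul_nonneg (mul_nonneg (hc_nonneg x y) (hω_pos x).le) (hω_pos y).le)
      (sq_nonneg _)
  have hQnonneg : ∀ f : V → ℝ,
      0 ≤ ∑ x, ∑ y, c x y * ω x * ω y * (f x - f y) ^ 2 := fun f =>
    Finset.sum_nonneg fun x _ => Finset.sum_nonneg fun y _ => hterm_nonneg f x y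
  -- the main quadratic form formula
  have hform : ∀ u : V → ℝ,
      ip (fun x => lap c u x + (-(lap c ω x) / ω x + lam) * u x) u
        = (1 / 2) * (∑ x, ∑ y, c x y * ω x * ω y * (u x / ω x - u y / ω y) ^ 2)
          + lam * ∑ x, u x * u x := by
    intro u
    have hu : ∀ x, u x = ω x * (u x / ω x) := fun x => by
      rw [mul_comm, div_mul_cancel₀ _ (hω0 x)]
    have hueq : u = fun y => ω y * (u y / ω y) := funext hu
    have hpt : ∀ x, (lap c u x + (-(lap c ω x) / ω x + lam) * u x) * u x
        = (∑ y, c x y * ω y * (u x / ω x - u y / ω y)) * (ω x * (u x / ω x))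
          + lam * (u x * u x) := by
      intro x
      have h := hrep (fun y => u y / ω y) x
      rw [← hueq] at h
      rw [← hu x] at h
      rw [← hu x]
      linear_combination (u x) * h
    unfold ip
    calc ∑ x, (lap c u x + (-(lap c ω x) / ω x + lam) * u x) * u x
        = ∑ x, ((∑ y, c x y * ω y * (u x / ω x - u y / ω y)) * (ω x * (u x / ω x))
            + lam * (u x * u x)) := Finset.sum_congr rfl fun x _ => hpt x
      _ = _ := by
          rw [Finset.sum_add_distrib, hQ (fun y => u y / ω y), ← Finset.mul_sum]
  constructor
  · rintro ⟨_, hpos, heig, _, _⟩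
    have hq : ∀ x, q x = -(lap c ω x) / ω x + lam := by
      intro x
      have h := congrFun heig x
      simp only [Pi.smul_apply, smul_eq_mul] at h
      field_simp [hω0 x]
      linarith
    refine ⟨?_, funext hq⟩
    have h := hpos ω
    rw [heig] at h
    have heval : ip (lam • ω) ω = lam * ∑ x, ω x ^ 2 := by
      unfold ip
      rw [Finset.mul_sum]
      exact Finset.sum_congr rfl fun x _ => by
        simp only [Pi.smul_apply, smul_eq_mul, sq]
        ring
    rw [heval, hω_unit, mul_one] at h
    exact h
  · rintro ⟨hlam, hq⟩
    subst hq
    refine ⟨fun u v => hsym _ u v, ?_, ?_, ?_, ?_⟩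
    · intro u
      have h := hform u
      have hN : 0 ≤ ∑ x, u x * u x :=
        Finset.sum_nonneg fun x _ => mul_self_nonneg _
      have hQn := hQnonneg (fun y => u y / ω y)
      show 0 ≤ ip (fun x => lap c u x + (-(lap c ω x) / ω x + lam) * u x) u
      rw [h]
      nlinarith [mul_nonneg hlam hN]
    · funext x
      simp only [Pi.smul_apply, smul_eq_mul]
      field_simp [hω0 x]
      ring
    · intro μ u hu hequ
      have hN : 0 < ∑ x, u x * u x := by
        obtain ⟨x₀, hx₀⟩ : ∃ x, u x ≠ 0 := by
          by_contra h
          push_neg at h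
          exact hu (funext h)
        exact Finset.sum_pos' (fun x _ => mul_self_nonneg _)
          ⟨x₀, Finset.mem_univ _, mul_self_pos.mpr hx₀⟩
      have h1 : ip (fun x => lap c u x + (-(lap c ω x) / ω x + lam) * u x) u
          = μ * ∑ x, u x * u x := by
        unfold ip
        rw [Finset.mul_sum]
        refine Finset.sum_congr rfl fun x _ => ?_
        have hx := congrFun hequ x
        simp only [Pi.smul_apply, smul_eq_mul] at hx
        linear_combination (u x) * hx
      rw [hform u] at h1
      nlinarith [hQnonneg (fun y => u y / ω y)]
    · intro u hequ
      have h1 : ip (fun x => lap c u x + (-(lap c ω x) / ω x + lam) * u x) u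
          = lam * ∑ x, u x * u x := by
        unfold ip
        rw [Finset.mul_sum]
        refine Finset.sum_congr rfl fun x _ => ?_
        have hx := congrFun hequ x
        simp only [Pi.smul_apply, smul_eq_mul] at hx
        linear_combination (u x) * hx
      rw [hform u] at h1
      have hQ0 : ∑ x, ∑ y, c x y * ω x * ω y * (u x / ω x - u y / ω y) ^ 2 = 0 := by
        linarith
      have h0 : ∀ x y : V, c x y * ω x * ω y * (u x / ω x - u y / ω y) ^ 2 = 0 := by
        intro x y
        have t1 : c x y * ω x * ω y * (u x / ω x - u y / ω y) ^ 2
            ≤ ∑ z, c x z * ω x * ω z * (u x / ω x - u z / ω z) ^ 2 :=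
          Finset.single_le_sum (f := fun z => c x z * ω x * ω z * (u x / ω x - u z / ω z) ^ 2)
            (fun i _ => hterm_nonneg (fun w => u w / ω w) x i) (Finset.mem_univ y)
        have t2 : ∑ z, c x z * ω x * ω z * (u x / ω x - u z / ω z) ^ 2
            ≤ ∑ a, ∑ z, c a z * ω a * ω z * (u a / ω a - u z / ω z) ^ 2 :=
          Finset.single_le_sum
            (f := fun a => ∑ z, c a z * ω a * ω z * (u a / ω a - u z / ω z) ^ 2)
            (fun i _ => Finset.sum_nonneg fun j _ => hterm_nonneg (fun w => u w / ω w) i j)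
            (Finset.mem_univ x)
        have hnn := hterm_nonneg (fun w => u w / ω w) x y
        linarith
      have hstep : ∀ a b : V, 0 < c a b → u a / ω a = u b / ω b := by
        intro a b hab
        have hpos' : 0 < c a b * ω a * ω b :=
          mul_pos (mul_pos hab (hω_pos a)) (hω_pos b)
        have hz := h0 a b
        have hsq : (u a / ω a - u b / ω b) ^ 2 = 0 := by
          rcases mul_eq_zero.mp hz with h | h
          · exact absurd h hpos'.ne'
          · exact h
        have hsub := pow_eq_zero_iff (n := 2) (by norm_num) |>.mp hsq
        linarith [sub_eq_zero.mp hsub]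
      obtain ⟨x₀⟩ := (inferInstance : Nonempty V)
      have hconst : ∀ x, u x / ω x = u x₀ / ω x₀ := by
        intro x
        have h := hconn x₀ x
        induction h with
        | refl => rfl
        | tail hst hc ih => exact ((hstep _ _ hc).symm).trans ih
      refine ⟨u x₀ / ω x₀, funext fun x => ?_⟩
      have hx := hconst x
      have hux : u x = (u x₀ / ω x₀) * ω x := by
        rw [← hx, div_mul_cancel₀ _ (hω0 x)]
      simpa [Pi.smul_apply, smul_eq_mul] using hux
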